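/- arXiv:0909.2552 — 3 statements merged into one kernel-verified Lean document; each statement's English description precedes it below -/
import Mathlib

section
/- Let ⟨x, y⟩ = x₁y₁ + x₂y₂ − x₃y₃ be the Minkowski bilinear form on ℝ³. Let t, n, b ∈ ℝ³ satisfy ⟨t,t⟩ = −1, ⟨n,n⟩ = 1, ⟨b,b⟩ = 1, ⟨t,n⟩ = ⟨t,b⟩ = ⟨n,b⟩ = 0. Let a, b₀ ∈ ℝ with a² + 4b₀ ≥ 0, let κ ≠ 0, r, v, β ∈ ℝ satisfy β² = ((a²/2) + b₀ + (a/2)·√(a² + 4b₀) + r²)·κ², let c₀ ∈ ℝ³, and set X = c₀ + (β/κ)·t + r·(cos(v)·n + sin(v)·b). Then ⟨X − c₀, X − c₀⟩ = −((a²/2) + b₀ + (a/2)·√(a² + 4b₀)). -/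
def mink (x y : Fin 3 → ℝ) : ℝ := x 0 * y 0 + x 1 * y 1 - x 2 * y 2

/-- With an orthonormal Minkowski frame `{t, n, b}` (with `t` timelike), if
`β² = ((a²/2) + b₀ + (a/2)√(a² + 4b₀) + r²)·κ²`, then the point
`X = c₀ + (β/κ)·t + r(cos v·n + sin v·b)` satisfies
`⟨X − c₀, X − c₀⟩ = −((a²/2) + b₀ + (a/2)√(a² + 4b₀))`. -/
theorem stmt_14 (t n b : Fin 3 → ℝ)
    (htt : mink t t = -1) (hnn : mink n n = 1) (hbb : mink b b = 1)
    (htn : mink t n = 0) (htb : mink t b = 0) (hnb : mink n b = 0)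
    (a b₀ : ℝ) (hab : 0 ≤ a ^ 2 + 4 * b₀)
    (κ : ℝ) (hκ : κ ≠ 0) (r v β : ℝ)
    (hβ : β ^ 2 = (a ^ 2 / 2 + b₀ + (a / 2) * Real.sqrt (a ^ 2 + 4 * b₀) + r ^ 2) * κ ^ 2)
    (c₀ : Fin 3 → ℝ) (X : Fin 3 → ℝ)
    (hX : X = c₀ + (β / κ) • t + r • (Real.cos v • n + Real.sin v • b)) :
    mink (X - c₀) (X - c₀)
      = -(a ^ 2 / 2 + b₀ + (a / 2) * Real.sqrt (a ^ 2 + 4 * b₀)) := by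
  have hp : (β / κ) ^ 2 = a ^ 2 / 2 + b₀ + (a / 2) * Real.sqrt (a ^ 2 + 4 * b₀) + r ^ 2 := by
    field_simp
    rw [mul_comm b₀ 4]
    linarith [hβ]
  subst hX
  simp only [mink, Pi.add_apply, Pi.sub_apply, Pi.smul_apply, smul_eq_mul] at *
  have hs := Real.sin_sq_add_cos_sq v
  linear_combination (β / κ) ^ 2 * htt + (r * Real.cos v) ^ 2 * hnn
    + (r * Real.sin v) ^ 2 * hbb + 2 * (β / κ) * (r * Real.cos v) * htn
    + 2 * (β / κ) * (r * Real.sin v) * htb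
    + 2 * (r * Real.cos v) * (r * Real.sin v) * hnb + r ^ 2 * hs - hp
end

section
/- Let ⟨x, y⟩ = x₁y₁ + x₂y₂ − x₃y₃ be the Minkowski bilinear form on ℝ³. Let t, n, b ∈ ℝ³ satisfy ⟨t,t⟩ = 0, ⟨n,n⟩ = 1, ⟨b,b⟩ = 0, ⟨t,n⟩ = 0, ⟨n,b⟩ = 0, ⟨t,b⟩ = 1. Let a ≠ 0, r > 0, v ∈ ℝ, c₀ ∈ ℝ³, and set X = c₀ + (r/(4a²))·t − (1/(2r))·b + v·n + r·v²·t. Then ⟨X − c₀, X − c₀⟩ = −1/(4a²); that is, X lies on the pseudohyperbolic surface of radius 1/(2|a|) centered at c₀. -/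
/-- With a null Frenet-type frame `{t, n, b}` (`t, b` lightlike, `⟨t,b⟩ = 1`,
`n` unit spacelike orthogonal to both), the point
`X = c₀ + (r/(4a²))·t − (1/(2r))·b + v·n + r·v²·t` satisfies
`⟨X − c₀, X − c₀⟩ = −1/(4a²)`. -/
theorem stmt_15 (t n b : Fin 3 → ℝ)
    (htt : mink t t = 0) (hnn : mink n n = 1) (hbb : mink b b = 0)
    (htn : mink t n = 0) (hnb : mink n b = 0) (htb : mink t b = 1)
    (a : ℝ) (ha : a ≠ 0) (r : ℝ) (hr : 0 < r) (v : ℝ)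
    (c₀ : Fin 3 → ℝ) (X : Fin 3 → ℝ)
    (hX : X = c₀ + (r / (4 * a ^ 2)) • t - (1 / (2 * r)) • b + v • n
        + (r * v ^ 2) • t) :
    mink (X - c₀) (X - c₀) = -(1 / (4 * a ^ 2)) := by
  subst hX
  simp only [mink, Pi.add_apply, Pi.sub_apply, Pi.smul_apply, smul_eq_mul] at *
  have hr' : r ≠ 0 := ne_of_gt hr
  field_simp
  linear_combination (2 * r^2 + 8 * a^2 * r^2 * v^2)^2 * htt
    + (2 * (2 * r^2 + 8 * a^2 * r^2 * v^2) * (-4 * a^2)) * htb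
    + (2 * (2 * r^2 + 8 * a^2 * r^2 * v^2) * (8 * a^2 * r * v)) * htn
    + (2 * (-4 * a^2) * (8 * a^2 * r * v)) * hnb
    + (8 * a^2 * r * v)^2 * hnn
    + (16 * a^4) * hbb
end

section
/- Let ⟨x, y⟩ = x₁y₁ + x₂y₂ − x₃y₃ be the Minkowski bilinear form on ℝ³. Let t, n, b ∈ ℝ³ satisfy ⟨t,t⟩ = 0, ⟨n,n⟩ = 1, ⟨b,b⟩ = 0, ⟨t,n⟩ = 0, ⟨n,b⟩ = 0, ⟨t,b⟩ = 1. Let a, b₀ ∈ ℝ with a² + 4b₀ ≥ 0, let r > 0, v ∈ ℝ, c₀ ∈ ℝ³, set M = (a² + 2b₀ − a·√(a² + 4b₀))/2, and set X = c₀ + M·r·t − (1/(2r))·b + v·n + r·v²·t. Then ⟨X − c₀, X − c₀⟩ = −M. -/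
/-- With a null Frenet-type frame `{t, n, b}` (`t, b` lightlike, `⟨t,b⟩ = 1`,
`n` unit spacelike orthogonal to both), set
`M = (a² + 2b₀ − a√(a² + 4b₀))/2`; then the point
`X = c₀ + M·r·t − (1/(2r))·b + v·n + r·v²·t` satisfies
`⟨X − c₀, X − c₀⟩ = −M`. -/
theorem stmt_16 (t n b : Fin 3 → ℝ)
    (htt : mink t t = 0) (hnn : mink n n = 1) (hbb : mink b b = 0)
    (htn : mink t n = 0) (hnb : mink n b = 0) (htb : mink t b = 1)
    (a b₀ : ℝ) (hab : 0 ≤ a ^ 2 + 4 * b₀)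
    (r : ℝ) (hr : 0 < r) (v : ℝ) (c₀ : Fin 3 → ℝ)
    (M : ℝ) (hM : M = (a ^ 2 + 2 * b₀ - a * Real.sqrt (a ^ 2 + 4 * b₀)) / 2)
    (X : Fin 3 → ℝ)
    (hX : X = c₀ + (M * r) • t - (1 / (2 * r)) • b + v • n + (r * v ^ 2) • t) :
    mink (X - c₀) (X - c₀) = -M := by
  have hr' : r ≠ 0 := hr.ne'
  set s : ℝ := 1 / (2 * r) with hs_def
  have hs : 2 * r * s = 1 := by rw [hs_def]; field_simp
  subst hX
  simp only [mink, Pi.add_apply, Pi.sub_apply, Pi.smul_apply, smul_eq_mul] at *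
  linear_combination (M*r + r*v^2)^2 * htt + v^2 * hnn + s^2 * hbb
    + (2*(M*r + r*v^2)*v) * htn + (-2*v*s) * hnb + (-2*(M*r + r*v^2)*s) * htb
    + (-(M + v^2)) * hs
end
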